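/- arXiv:1607.03651 — 3 statements merged into one kernel-verified Lean document; each statement's English description precedes it below -/
import Mathlib

section
/- For all integers n, k ≥ 0: (i) ∂^n(b_1^k) equals the image of the partial k-Bell polynomial B^k_{n+k,k} under the ℚ-algebra homomorphism R → R sending a_i ↦ b_i and b_i ↦ b_i; and (ii) binom(n+k, n) · ∂^n(b_1^k) equals the sum, over all set partitions of {1,…,n+k} into k nonempty blocks, of ∏_{blocks B} |B|·b_{|B|} (i.e. it equals the classical partial Bell polynomial B_{n+k,k} evaluated at the variables b_1, 2b_2, 3b_3, …). -/
noncomputable section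

/-- `R = ℚ[a_1,a_2,…;b_1,b_2,…]`, realized as the polynomial ring over `ℚ` with variables
`X (true, i) = a_i` and `X (false, i) = b_i`. -/
abbrev RR : Type := MvPolynomial (Bool × ℕ) ℚ

/-- the variable `a_i` -/
def va (i : ℕ) : RR := MvPolynomial.X (true, i)
/-- the variable `b_i` -/
def vb (i : ℕ) : RR := MvPolynomial.X (false, i)

/-- the derivation `∂` of `R` with `∂ a_i = a_{i+1}` and `∂ b_i = b_{i+1}` -/
def del : RR → RR :=
  fun p => MvPolynomial.mkDerivation ℚ (fun s : Bool × ℕ => MvPolynomial.X (s.1, s.2 + 1)) p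

/-- coefficientwise extension of a map on coefficients to `A[t]` (i.e. `∂` with `∂ t = 0`) -/
def polyLift {A : Type*} [Semiring A] (D : A → A) (p : Polynomial A) : Polynomial A :=
  p.sum fun i c => Polynomial.C (D c) * Polynomial.X ^ i

/-- the map `E : R[t] → R[t]`, `E(p) = t·b_1·p + ∂(p)` -/
def EOp (p : Polynomial RR) : Polynomial RR :=
  Polynomial.C (vb 1) * Polynomial.X * p + polyLift del p

/-- the partial `r`-Bell polynomial `B^r_{n+r,k+r}`: the coefficient of `t^k` in `E^n(a_1^r)` -/
def rBell (n k r : ℕ) : RR := (EOp^[n] (Polynomial.C (va 1 ^ r))).coeff k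

/-- Exponential of a formal multivariate power series (intended for series with zero
constant term): `exp(u) = ∑_{j≥0} u^j/j!`; for a series `u` of positive order only the
terms with `j ≤ |d|` contribute to the coefficient of a monomial of total degree `|d|`. -/
def sexp {σ : Type*} {A : Type*} [Ring A] [Algebra ℚ A] (u : MvPowerSeries σ A) :
    MvPowerSeries σ A :=
  fun d => MvPowerSeries.coeff d
    (∑ j ∈ Finset.range (d.sum (fun _ m => m) + 1), (j.factorial : ℚ)⁻¹ • u ^ j)

/-- the `ℚ`-algebra endomorphism of `R` sending `a_i ↦ b_i` and `b_i ↦ b_i` -/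
def tauMap : RR →ₐ[ℚ] RR :=
  MvPolynomial.aeval (fun s : Bool × ℕ => MvPolynomial.X (false, s.2))

/-- `IsBSP N k r π` : `π` is a bicolored set partition of `{0,…,N-1}` (representing
`{1,…,N}`) into `k + r` pairwise disjoint nonempty blocks, each block carrying a color
(`true` = color 1, `false` = color 2), such that the blocks colored 1 are exactly the
blocks containing one of the first `r` elements and the first `r` elements lie in `r`
distinct blocks.  For `r = 0` all blocks are forced to be colored `false`, so
`IsBSP N k 0` describes exactly the (plain) set partitions of `{1,…,N}` into `k`
nonempty blocks. -/
def IsBSP (N k r : ℕ) (π : Finset (Finset (Fin N) × Bool)) : Prop :=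
  π.card = k + r ∧
  (∀ p ∈ π, p.1.Nonempty) ∧
  (∀ p ∈ π, ∀ q ∈ π, p ≠ q → Disjoint p.1 q.1) ∧
  (∀ x : Fin N, ∃ p ∈ π, x ∈ p.1) ∧
  (∀ p ∈ π, (p.2 = true ↔ ∃ i ∈ p.1, (i : ℕ) < r)) ∧
  (∀ p ∈ π, ∀ i ∈ p.1, ∀ j ∈ p.1, (i : ℕ) < r → (j : ℕ) < r → i = j)

set_option synthInstance.maxSize 2000 in
instance (N k r : ℕ) : DecidablePred (IsBSP N k r) := fun π => by
  unfold IsBSP; infer_instance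

def delD : Derivation ℚ RR RR :=
  MvPolynomial.mkDerivation ℚ (fun s : Bool × ℕ => MvPolynomial.X (s.1, s.2 + 1))

lemma del_eq (p : RR) : del p = delD p := rfl

lemma del_add (p q : RR) : del (p + q) = del p + del q := by
  simp [del_eq, map_add]

lemma del_zero : del (0 : RR) = 0 := by simp [del_eq]

lemma del_X (s : Bool × ℕ) : del (MvPolynomial.X s) = MvPolynomial.X (s.1, s.2 + 1) := by
  simp [del_eq, delD, MvPolynomial.mkDerivation_X]

lemma del_vb (m : ℕ) : del (vb m) = vb (m + 1) := del_X _

lemma del_C (q : ℚ) : del (MvPolynomial.C q : RR) = 0 := by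
  have := delD.map_algebraMap q
  simpa [del_eq, MvPolynomial.algebraMap_eq] using this

lemma del_mul (p q : RR) : del (p * q) = p * del q + q * del p := by
  have := delD.leibniz p q
  simpa [del_eq, smul_eq_mul] using this

lemma coeff0_polyLift (p : Polynomial RR) : (polyLift del p).coeff 0 = del (p.coeff 0) := by
  rw [polyLift, Polynomial.sum, Polynomial.finset_sum_coeff]
  simp only [Polynomial.coeff_C_mul, Polynomial.coeff_X_pow]
  rw [Finset.sum_eq_single 0]
  · simp
  · intro i _ hi
    simp [(Ne.symm hi)]
  · intro h
    simp [Polynomial.notMem_support_iff.mp h, del_zero]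

lemma coeff0_EOp (p : Polynomial RR) : (EOp p).coeff 0 = del (p.coeff 0) := by
  rw [EOp, Polynomial.coeff_add, coeff0_polyLift]
  have : (Polynomial.C (vb 1) * Polynomial.X * p).coeff 0 = 0 := by
    rw [Polynomial.mul_coeff_zero]
    simp [Polynomial.mul_coeff_zero]
  rw [this, zero_add]

lemma coeff0_iter (n : ℕ) (c : RR) : (EOp^[n] (Polynomial.C c)).coeff 0 = del^[n] c := by
  induction n with
  | zero => simp
  | succ n ih =>
    rw [Function.iterate_succ_apply', Function.iterate_succ_apply', coeff0_EOp, ih]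

lemma tau_X (s : Bool × ℕ) : tauMap (MvPolynomial.X s) = MvPolynomial.X (false, s.2) := by
  simp [tauMap]

lemma tau_del (p : RR) : tauMap (del p) = del (tauMap p) := by
  induction p using MvPolynomial.induction_on with
  | C q => simp [del_C, MvPolynomial.aeval_C, tauMap]
  | add p q hp hq => rw [del_add, map_add, hp, hq, map_add, del_add]
  | mul_X p s hp =>
    rw [del_mul, map_add, map_mul, map_mul, hp, map_mul, del_mul, del_X, tau_X, tau_X, del_X]

lemma tau_del_iter (n : ℕ) (p : RR) : tauMap (del^[n] p) = del^[n] (tauMap p) := by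
  induction n with
  | zero => rfl
  | succ n ih =>
    rw [Function.iterate_succ_apply', Function.iterate_succ_apply', tau_del, ih]

lemma part_i (n k : ℕ) : del^[n] (vb 1 ^ k) = tauMap (rBell n 0 k) := by
  rw [rBell, coeff0_iter, tau_del_iter]
  congr 1
  rw [map_pow, va, tau_X]
  rfl

lemma del_sum {α : Type*} (s : Finset α) (g : α → RR) :
    del (∑ i ∈ s, g i) = ∑ i ∈ s, del (g i) := by
  simp [del_eq, map_sum]

lemma del_iter_sum {α : Type*} (m : ℕ) (s : Finset α) (g : α → RR) :
    del^[m] (∑ i ∈ s, g i) = ∑ i ∈ s, del^[m] (g i) := by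
  induction m generalizing g with
  | zero => rfl
  | succ m ih =>
    rw [Function.iterate_succ_apply, del_sum, ih]
    exact Finset.sum_congr rfl fun i _ => (Function.iterate_succ_apply del m (g i)).symm

lemma del_prod {α : Type*} [DecidableEq α] (s : Finset α) (g : α → RR) :
    del (∏ i ∈ s, g i) = ∑ i ∈ s, del (g i) * ∏ j ∈ s.erase i, g j := by
  induction s using Finset.induction_on with
  | empty => simp [del_eq]
  | insert a s ha ih =>
    rw [Finset.prod_insert ha, del_mul, ih, Finset.mul_sum, Finset.sum_insert ha,
      Finset.erase_insert ha, add_comm]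
    congr 1
    · exact mul_comm _ _
    · apply Finset.sum_congr rfl
      intro i hi
      rw [Finset.erase_insert_of_ne (fun h => ha (by rw [h]; exact hi)),
        Finset.prod_insert (fun h => ha (Finset.mem_of_mem_erase h))]
      ring

def cnt {n k : ℕ} (f : Fin n → Fin k) (j : Fin k) : ℕ :=
  (Finset.univ.filter fun i => f i = j).card

lemma cnt_eq_sum {n k : ℕ} (f : Fin n → Fin k) (j : Fin k) :
    cnt f j = ∑ i : Fin n, if f i = j then 1 else 0 := by
  rw [cnt, Finset.card_filter]

lemma cnt_cons {n k : ℕ} (j0 : Fin k) (f : Fin n → Fin k) (j : Fin k) :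
    cnt (Fin.cons j0 f) j = (if j0 = j then 1 else 0) + cnt f j := by
  rw [cnt_eq_sum, Fin.sum_univ_succ, cnt_eq_sum]
  simp

lemma L1 {k : ℕ} (n : ℕ) (c : Fin k → ℕ) :
    del^[n] (∏ j : Fin k, vb (c j)) =
      ∑ f : Fin n → Fin k, ∏ j : Fin k, vb (c j + cnt f j) := by
  induction n generalizing c with
  | zero =>
    rw [Function.iterate_zero_apply, Fintype.sum_unique]
    simp [cnt]
  | succ n ih =>
    have step : del (∏ j : Fin k, vb (c j)) =
        ∑ i : Fin k, ∏ j : Fin k, vb (c j + if j = i then 1 else 0) := by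
      rw [del_prod]
      apply Finset.sum_congr rfl
      intro i _
      rw [del_vb, ← Finset.mul_prod_erase Finset.univ
        (fun j => vb (c j + if j = i then 1 else 0)) (Finset.mem_univ i)]
      rw [if_pos rfl]
      congr 1
      apply Finset.prod_congr rfl
      intro j hj
      rw [if_neg (Finset.ne_of_mem_erase hj), add_zero]
    rw [Function.iterate_succ_apply, step, del_iter_sum]
    simp_rw [ih]
    rw [← Fintype.sum_prod_type']
    apply Fintype.sum_equiv (Fin.consEquiv (fun _ : Fin (n+1) => Fin k))
    intro p
    apply Finset.prod_congr rfl
    intro j _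
    congr 1
    have hce : (Fin.consEquiv fun _ => Fin k) p = Fin.cons p.1 p.2 := rfl
    rw [hce, cnt_cons]
    rcases eq_or_ne p.1 j with h | h
    · simp [h, add_assoc]
    · simp [h, Ne.symm h]

lemma L1' {k : ℕ} (n : ℕ) :
    del^[n] (vb 1 ^ k) = ∑ f : Fin n → Fin k, ∏ j : Fin k, vb (1 + cnt f j) := by
  have : vb 1 ^ k = ∏ _j : Fin k, vb 1 := by
    rw [Finset.prod_const, Finset.card_univ, Fintype.card_fin]
  rw [this, L1 n (fun _ => 1)]

variable {n k : ℕ}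

def Tset (ρ : Fin k ↪ Fin (n + k)) : Finset (Fin (n + k)) := Finset.univ.map ρ

lemma Tc_card (ρ : Fin k ↪ Fin (n + k)) : (Tset ρ)ᶜ.card = n := by
  rw [Finset.card_compl, Tset, Finset.card_map, Finset.card_univ, Fintype.card_fin,
    Fintype.card_fin]
  omega

def eC (ρ : Fin k ↪ Fin (n + k)) : Fin n ≃o {x // x ∈ (Tset ρ)ᶜ} :=
  (Tset ρ)ᶜ.orderIsoOfFin (Tc_card ρ)

def mkh (ρ : Fin k ↪ Fin (n + k)) (f : Fin n → Fin k) (x : Fin (n + k)) : Fin k :=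
  if hx : x ∈ Tset ρ then (Finset.mem_map.mp hx).choose
  else f ((eC ρ).symm ⟨x, Finset.mem_compl.mpr hx⟩)

lemma mkh_section (ρ : Fin k ↪ Fin (n + k)) (f : Fin n → Fin k) (j : Fin k) :
    mkh ρ f (ρ j) = j := by
  have hx : ρ j ∈ Tset ρ := Finset.mem_map_of_mem ρ (Finset.mem_univ j)
  rw [mkh, dif_pos hx]
  exact ρ.injective (Finset.mem_map.mp hx).choose_spec.2

lemma mkh_notmem (ρ : Fin k ↪ Fin (n + k)) (f : Fin n → Fin k) (x : Fin (n + k))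
    (hx : x ∉ Tset ρ) :
    mkh ρ f x = f ((eC ρ).symm ⟨x, Finset.mem_compl.mpr hx⟩) := dif_neg hx

def E23 : (Fin k ↪ Fin (n + k)) × (Fin n → Fin k) ≃
    Σ h : Fin (n + k) → Fin k, {ι : Fin k → Fin (n + k) // ∀ j, h (ι j) = j} where
  toFun q := ⟨mkh q.1 q.2, ⟨q.1, mkh_section q.1 q.2⟩⟩
  invFun q :=
    ⟨⟨q.2.1, fun a b hab => by
        have := congrArg q.1 hab; rwa [q.2.2, q.2.2] at this⟩,
      fun i => q.1 ((eC ⟨q.2.1, fun a b hab => by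
        have := congrArg q.1 hab; rwa [q.2.2, q.2.2] at this⟩) i)⟩
  left_inv := by
    rintro ⟨ρ, f⟩
    refine Prod.ext (by ext x; rfl) ?_
    funext i
    show mkh ρ f ((eC ρ) i : Fin (n + k)) = f i
    have hm : ((eC ρ) i : Fin (n + k)) ∉ Tset ρ := Finset.mem_compl.mp ((eC ρ) i).2
    rw [mkh_notmem ρ f _ hm]
    have h2 : (⟨((eC ρ) i : Fin (n + k)), Finset.mem_compl.mpr hm⟩ : {x // x ∈ (Tset ρ)ᶜ}) =
        (eC ρ) i := Subtype.ext rfl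
    rw [h2, OrderIso.symm_apply_apply]
  right_inv := by
    rintro ⟨h, ι, hι⟩
    have hinj : Function.Injective ι := fun a b hab => by
      have := congrArg h hab; rwa [hι, hι] at this
    have h1 : mkh ⟨ι, hinj⟩ (fun i => h ((eC ⟨ι, hinj⟩) i)) = h := by
      funext x
      by_cases hx : x ∈ Tset ⟨ι, hinj⟩
      · obtain ⟨j, -, hj⟩ := Finset.mem_map.mp hx
        have : (⟨ι, hinj⟩ : Fin k ↪ Fin (n + k)) j = x := hj
        rw [← this, mkh_section]
        exact (hι j).symm
      · rw [mkh_notmem _ _ _ hx]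
        rw [OrderIso.apply_symm_apply]
    have key : ∀ h' : Fin (n + k) → Fin k, h' = h → ∀ sec : ∀ j, h' (ι j) = j,
        (⟨h', ⟨ι, sec⟩⟩ :
          Σ h : Fin (n + k) → Fin k, {ι : Fin k → Fin (n + k) // ∀ j, h (ι j) = j}) =
          ⟨h, ⟨ι, hι⟩⟩ := by
      rintro h' rfl sec
      rfl
    exact key _ h1 _

lemma s_mkh (ρ : Fin k ↪ Fin (n + k)) (f : Fin n → Fin k) (j : Fin k) :
    (Finset.univ.filter fun x => mkh ρ f x = j).card = 1 + cnt f j := by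
  have e1 : (Tset ρ).filter (fun x => mkh ρ f x = j) = {ρ j} := by
    ext x
    simp only [Finset.mem_filter, Finset.mem_singleton]
    constructor
    · rintro ⟨hx, hm⟩
      obtain ⟨j', -, hj'⟩ := Finset.mem_map.mp hx
      rw [← hj', mkh_section] at hm
      rw [← hj', hm]
    · rintro rfl
      exact ⟨Finset.mem_map_of_mem _ (Finset.mem_univ j), mkh_section ρ f j⟩
  have e2 : ((Tset ρ)ᶜ).filter (fun x => mkh ρ f x = j) =
      (Finset.univ.filter fun i => f i = j).image (fun i => ((eC ρ) i : Fin (n + k))) := by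
    ext x
    simp only [Finset.mem_filter, Finset.mem_image, Finset.mem_univ, true_and]
    constructor
    · rintro ⟨hx, hm⟩
      have hx' : x ∉ Tset ρ := Finset.mem_compl.mp hx
      refine ⟨(eC ρ).symm ⟨x, hx⟩, ?_, ?_⟩
      · rw [mkh_notmem ρ f x hx'] at hm
        exact hm
      · rw [OrderIso.apply_symm_apply]
    · rintro ⟨i, hi, rfl⟩
      have hc : ((eC ρ) i : Fin (n + k)) ∈ (Tset ρ)ᶜ := ((eC ρ) i).2
      refine ⟨hc, ?_⟩
      rw [mkh_notmem ρ f _ (Finset.mem_compl.mp hc)]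
      have h2 : (⟨((eC ρ) i : Fin (n + k)), Finset.mem_compl.mpr (Finset.mem_compl.mp hc)⟩ :
          {x // x ∈ (Tset ρ)ᶜ}) = (eC ρ) i := Subtype.ext rfl
      rw [h2, OrderIso.symm_apply_apply]
      exact hi
  have hdisj : Disjoint ((Tset ρ).filter (fun x => mkh ρ f x = j))
      (((Tset ρ)ᶜ).filter (fun x => mkh ρ f x = j)) :=
    Finset.disjoint_filter_filter disjoint_compl_right
  calc (Finset.univ.filter fun x => mkh ρ f x = j).card
      = ((Tset ρ ∪ (Tset ρ)ᶜ).filter (fun x => mkh ρ f x = j)).card := by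
        rw [Finset.union_compl]
    _ = 1 + cnt f j := by
        rw [Finset.filter_union, Finset.card_union_of_disjoint hdisj, e1, e2,
          Finset.card_singleton, Finset.card_image_of_injective _
            (fun a b hab => (eC ρ).injective (Subtype.ext hab)), cnt]


variable {N k : ℕ}

def sfib (h : Fin N → Fin k) (j : Fin k) : ℕ := (Finset.univ.filter fun x => h x = j).card

def Phi (h : Fin N → Fin k) : Finset (Finset (Fin N) × Bool) :=
  Finset.univ.image fun j => ((Finset.univ.filter fun x => h x = j), false)

lemma fiber_inj {h : Fin N → Fin k} (hs : Function.Surjective h) :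
    Function.Injective (fun j : Fin k => ((Finset.univ.filter fun x => h x = j), false)) := by
  intro j1 j2 he
  have h1 : (Finset.univ.filter fun x => h x = j1) = (Finset.univ.filter fun x => h x = j2) :=
    congrArg Prod.fst he
  obtain ⟨x, hx⟩ := hs j1
  have hm : x ∈ Finset.univ.filter fun x => h x = j2 := by
    rw [← h1]; simp [hx]
  have := (Finset.mem_filter.mp hm).2
  rw [hx] at this
  exact this

lemma isBSP_Phi (h : Fin N → Fin k) (hs : Function.Surjective h) : IsBSP N k 0 (Phi h) := by
  refine ⟨?_, ?_, ?_, ?_, ?_, ?_⟩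
  · rw [Phi, Finset.card_image_of_injective _ (fiber_inj hs), Finset.card_univ,
      Fintype.card_fin, add_zero]
  · rintro p hp
    obtain ⟨j, -, rfl⟩ := Finset.mem_image.mp hp
    obtain ⟨x, hx⟩ := hs j
    exact ⟨x, by simp [hx]⟩
  · rintro p hp q hq hne
    obtain ⟨j1, -, rfl⟩ := Finset.mem_image.mp hp
    obtain ⟨j2, -, rfl⟩ := Finset.mem_image.mp hq
    have hj : j1 ≠ j2 := fun e => hne (by rw [e])
    rw [Finset.disjoint_left]
    intro x hx1 hx2
    simp only [Finset.mem_filter, Finset.mem_univ, true_and] at hx1 hx2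
    exact hj (by rw [← hx1, ← hx2])
  · intro x
    exact ⟨((Finset.univ.filter fun y => h y = h x), false),
      Finset.mem_image_of_mem _ (Finset.mem_univ (h x)), by simp⟩
  · rintro p hp
    obtain ⟨j, -, rfl⟩ := Finset.mem_image.mp hp
    simp
  · rintro p hp i - j - hi hj
    exact absurd hi (Nat.not_lt_zero _)

lemma existsUnique_block {π : Finset (Finset (Fin N) × Bool)} (hπ : IsBSP N k 0 π) (x : Fin N) :
    ∃! p, p ∈ π ∧ x ∈ p.1 := by
  obtain ⟨p, hp, hxp⟩ := hπ.2.2.2.1 x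
  refine ⟨p, ⟨hp, hxp⟩, ?_⟩
  rintro q ⟨hq, hxq⟩
  by_contra hne
  exact (Finset.disjoint_left.mp (hπ.2.2.1 q hq p hp hne) hxq) hxp

def blockOf (π : Finset (Finset (Fin N) × Bool)) (hπ : IsBSP N k 0 π) (x : Fin N) :
    Finset (Fin N) × Bool :=
  Finset.choose (fun p => x ∈ p.1) π (existsUnique_block hπ x)

lemma blockOf_mem (π : Finset (Finset (Fin N) × Bool)) (hπ : IsBSP N k 0 π) (x : Fin N) :
    blockOf π hπ x ∈ π := Finset.choose_mem _ _ _

lemma mem_blockOf (π : Finset (Finset (Fin N) × Bool)) (hπ : IsBSP N k 0 π) (x : Fin N) :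
    x ∈ (blockOf π hπ x).1 :=
  Finset.choose_property (fun p => x ∈ p.1) π (existsUnique_block hπ x)

lemma blockOf_eq (π : Finset (Finset (Fin N) × Bool)) (hπ : IsBSP N k 0 π) (x : Fin N)
    {p : Finset (Fin N) × Bool} (hp : p ∈ π) (hx : x ∈ p.1) : blockOf π hπ x = p :=
  (existsUnique_block hπ x).unique ⟨blockOf_mem π hπ x, mem_blockOf π hπ x⟩ ⟨hp, hx⟩

lemma color_false (π : Finset (Finset (Fin N) × Bool)) (hπ : IsBSP N k 0 π)
    {p : Finset (Fin N) × Bool} (hp : p ∈ π) : p.2 = false := by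
  rcases Bool.eq_false_or_eq_true p.2 with h | h
  · obtain ⟨i, -, hi⟩ := (hπ.2.2.2.2.1 p hp).mp h
    exact absurd hi (Nat.not_lt_zero _)
  · exact h

def mkH (π : Finset (Finset (Fin N) × Bool)) (hπ : IsBSP N k 0 π)
    (e : Fin k ≃ {p // p ∈ π}) (x : Fin N) : Fin k :=
  e.symm ⟨blockOf π hπ x, blockOf_mem π hπ x⟩

lemma mkH_eq_iff (π : Finset (Finset (Fin N) × Bool)) (hπ : IsBSP N k 0 π)
    (e : Fin k ≃ {p // p ∈ π}) (x : Fin N) (j : Fin k) :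
    mkH π hπ e x = j ↔ x ∈ ((e j) : Finset (Fin N) × Bool).1 := by
  rw [mkH, Equiv.symm_apply_eq]
  constructor
  · intro hj
    have : blockOf π hπ x = ((e j) : Finset (Fin N) × Bool) := congrArg Subtype.val hj
    rw [← this]
    exact mem_blockOf π hπ x
  · intro hx
    exact Subtype.ext (blockOf_eq π hπ x (e j).2 hx)

lemma mkH_surj (π : Finset (Finset (Fin N) × Bool)) (hπ : IsBSP N k 0 π)
    (e : Fin k ≃ {p // p ∈ π}) : Function.Surjective (mkH π hπ e) := by
  intro j
  obtain ⟨x, hx⟩ := hπ.2.1 _ (e j).2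
  exact ⟨x, (mkH_eq_iff π hπ e x j).mpr hx⟩

lemma fiber_mkH (π : Finset (Finset (Fin N) × Bool)) (hπ : IsBSP N k 0 π)
    (e : Fin k ≃ {p // p ∈ π}) (j : Fin k) :
    (Finset.univ.filter fun x => mkH π hπ e x = j) = ((e j) : Finset (Fin N) × Bool).1 := by
  ext x
  simp [mkH_eq_iff π hπ e x j]

lemma Phi_mkH (π : Finset (Finset (Fin N) × Bool)) (hπ : IsBSP N k 0 π)
    (e : Fin k ≃ {p // p ∈ π}) : Phi (mkH π hπ e) = π := by
  have key : ∀ j, ((Finset.univ.filter fun x => mkH π hπ e x = j), false) =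
      ((e j) : Finset (Fin N) × Bool) := by
    intro j
    rw [fiber_mkH π hπ e j]
    exact Prod.ext rfl (color_false π hπ (e j).2).symm
  ext p
  simp only [Phi, Finset.mem_image, Finset.mem_univ, true_and]
  constructor
  · rintro ⟨j, rfl⟩
    rw [key j]
    exact (e j).2
  · intro hp
    exact ⟨e.symm ⟨p, hp⟩, by rw [key, Equiv.apply_symm_apply]⟩

lemma mem_Phi (h : Fin N → Fin k) (j : Fin k) :
    ((Finset.univ.filter fun x => h x = j), false) ∈ Phi h :=
  Finset.mem_image_of_mem _ (Finset.mem_univ j)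

def fiberEquiv (π : Finset (Finset (Fin N) × Bool)) (hπ : IsBSP N k 0 π) :
    {h : Fin N → Fin k // Function.Surjective h ∧ Phi h = π} ≃ (Fin k ≃ {p // p ∈ π}) where
  toFun := fun ⟨hf, hs, hp⟩ => Equiv.ofBijective
    (fun j => ⟨((Finset.univ.filter fun x => hf x = j), false), by
      rw [← hp]; exact mem_Phi hf j⟩)
    ⟨fun a b hab => fiber_inj hs (congrArg Subtype.val hab), by
      rintro ⟨p, hp'⟩
      rw [← hp] at hp'
      obtain ⟨j, -, hj⟩ := Finset.mem_image.mp hp'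
      exact ⟨j, Subtype.ext hj⟩⟩
  invFun e := ⟨mkH π hπ e, mkH_surj π hπ e, Phi_mkH π hπ e⟩
  left_inv := by
    rintro ⟨h, hs, hp⟩
    apply Subtype.ext
    funext x
    show mkH π hπ _ x = h x
    rw [mkH, Equiv.symm_apply_eq]
    apply Subtype.ext
    show blockOf π hπ x = ((Finset.univ.filter fun y => h y = h x), false)
    exact blockOf_eq π hπ x (hp ▸ mem_Phi h (h x)) (by simp)
  right_inv := by
    intro e
    apply Equiv.ext
    intro j
    apply Subtype.ext
    show ((Finset.univ.filter fun x => mkH π hπ e x = j), false) = _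
    rw [fiber_mkH π hπ e j]
    exact Prod.ext rfl (color_false π hπ (e j).2).symm

lemma card_fiber (π : Finset (Finset (Fin N) × Bool)) (hπ : IsBSP N k 0 π) :
    Fintype.card {h : Fin N → Fin k // Function.Surjective h ∧ Phi h = π} = k.factorial := by
  rw [Fintype.card_congr (fiberEquiv π hπ)]
  have hc : Fintype.card {p // p ∈ π} = k := by
    rw [Fintype.card_coe, hπ.1, add_zero]
  have e0 : Fin k ≃ {p // p ∈ π} :=
    Classical.choice (Fintype.card_eq.mp (by rw [Fintype.card_fin, hc]))
  rw [Fintype.card_equiv e0, Fintype.card_fin]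

lemma L4 :
    ∑ h : Fin N → Fin k, ∏ j : Fin k, ((sfib h j : RR) * vb (sfib h j)) =
      (k.factorial : RR) * ∑ π ∈ Finset.univ.filter
        (fun π : Finset (Finset (Fin N) × Bool) => IsBSP N k 0 π),
        ∏ p ∈ π, ((p.1.card : RR) * vb p.1.card) := by
  classical
  have h0 : ∑ h ∈ Finset.univ.filter (fun h : Fin N → Fin k => Function.Surjective h),
      ∏ j : Fin k, ((sfib h j : RR) * vb (sfib h j)) =
      ∑ h : Fin N → Fin k, ∏ j : Fin k, ((sfib h j : RR) * vb (sfib h j)) := by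
    apply Finset.sum_filter_of_ne
    intro h _ hne
    by_contra hns
    apply hne
    rw [Function.Surjective] at hns
    push_neg at hns
    obtain ⟨j, hj⟩ := hns
    apply Finset.prod_eq_zero (Finset.mem_univ j)
    have hz : sfib h j = 0 := by
      rw [sfib, Finset.card_eq_zero, Finset.filter_eq_empty_iff]
      exact fun _ _ => hj _
    rw [hz]
    simp
  have h1 : ∀ π ∈ Finset.univ.filter (fun π : Finset (Finset (Fin N) × Bool) => IsBSP N k 0 π),
      (∑ h ∈ (Finset.univ.filter (fun h : Fin N → Fin k => Function.Surjective h)).filter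
        (fun h => Phi h = π), ∏ j : Fin k, ((sfib h j : RR) * vb (sfib h j))) =
      k.factorial • ∏ p ∈ π, ((p.1.card : RR) * vb p.1.card) := by
    intro π hπm
    have hπ : IsBSP N k 0 π := (Finset.mem_filter.mp hπm).2
    have hWeq : ∀ h ∈ (Finset.univ.filter
        (fun h : Fin N → Fin k => Function.Surjective h)).filter (fun h => Phi h = π),
        (∏ j : Fin k, ((sfib h j : RR) * vb (sfib h j))) =
        ∏ p ∈ π, ((p.1.card : RR) * vb p.1.card) := by
      intro h hm
      have hph : Phi h = π := (Finset.mem_filter.mp hm).2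
      have hs : Function.Surjective h :=
        (Finset.mem_filter.mp (Finset.mem_filter.mp hm).1).2
      rw [← hph, Phi, Finset.prod_image (fun j1 _ j2 _ he => fiber_inj hs he)]
      exact Finset.prod_congr rfl fun j _ => rfl
    rw [Finset.sum_congr rfl hWeq, Finset.sum_const]
    congr 1
    rw [Finset.filter_filter, ← card_fiber π hπ, Fintype.card_subtype]
  rw [← h0, ← Finset.sum_fiberwise_of_maps_to
    (fun h hm => Finset.mem_filter.mpr ⟨Finset.mem_univ _,
      isBSP_Phi h (Finset.mem_filter.mp hm).2⟩)
    (fun h => ∏ j : Fin k, ((sfib h j : RR) * vb (sfib h j))),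
    Finset.sum_congr rfl h1, ← Finset.smul_sum, nsmul_eq_mul]


lemma A2 {n k : ℕ} :
    (((n + k).descFactorial k : ℕ) : RR) *
        ∑ f : Fin n → Fin k, ∏ j : Fin k, vb (1 + cnt f j) =
      ∑ h : Fin (n + k) → Fin k, ∏ j : Fin k, ((sfib h j : RR) * vb (sfib h j)) := by
  classical
  have h1 : (∑ q : (Fin k ↪ Fin (n + k)) × (Fin n → Fin k), ∏ j : Fin k, vb (1 + cnt q.2 j))
      = ∑ q : Σ h : Fin (n + k) → Fin k, {ι : Fin k → Fin (n + k) // ∀ j, h (ι j) = j},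
          ∏ j : Fin k, vb (sfib q.1 j) := by
    apply Fintype.sum_equiv E23
    intro q
    apply Finset.prod_congr rfl
    intro j _
    congr 1
    exact (s_mkh q.1 q.2 j).symm
  have h2 : (∑ q : (Fin k ↪ Fin (n + k)) × (Fin n → Fin k), ∏ j : Fin k, vb (1 + cnt q.2 j))
      = (Fintype.card (Fin k ↪ Fin (n + k))) •
          ∑ f : Fin n → Fin k, ∏ j : Fin k, vb (1 + cnt f j) := by
    rw [Fintype.sum_prod_type]
    show (∑ _ρ : Fin k ↪ Fin (n + k), ∑ f : Fin n → Fin k, ∏ j : Fin k, vb (1 + cnt f j)) = _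
    rw [Finset.sum_const, Finset.card_univ]
  have h3 : ∀ h : Fin (n + k) → Fin k,
      Fintype.card {ι : Fin k → Fin (n + k) // ∀ j, h (ι j) = j} = ∏ j : Fin k, sfib h j := by
    intro h
    rw [Fintype.card_congr (Equiv.subtypePiEquivPi (p := fun j x => h x = j)), Fintype.card_pi]
    exact Finset.prod_congr rfl fun j _ => Fintype.card_subtype _
  have h4 : (∑ q : Σ h : Fin (n + k) → Fin k, {ι : Fin k → Fin (n + k) // ∀ j, h (ι j) = j},
        ∏ j : Fin k, vb (sfib q.1 j))
      = ∑ h : Fin (n + k) → Fin k, ∏ j : Fin k, ((sfib h j : RR) * vb (sfib h j)) := by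
    rw [← Finset.univ_sigma_univ, Finset.sum_sigma]
    apply Finset.sum_congr rfl
    intro h _
    show (∑ _s : {ι : Fin k → Fin (n + k) // ∀ j, h (ι j) = j},
      ∏ j : Fin k, vb (sfib h j)) = _
    rw [Finset.sum_const, Finset.card_univ, h3, nsmul_eq_mul, Nat.cast_prod,
      ← Finset.prod_mul_distrib]
  calc (((n + k).descFactorial k : ℕ) : RR) *
        ∑ f : Fin n → Fin k, ∏ j : Fin k, vb (1 + cnt f j)
      = (Fintype.card (Fin k ↪ Fin (n + k))) •
          ∑ f : Fin n → Fin k, ∏ j : Fin k, vb (1 + cnt f j) := by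
        rw [Fintype.card_embedding_eq, Fintype.card_fin, Fintype.card_fin, nsmul_eq_mul]
    _ = ∑ q : (Fin k ↪ Fin (n + k)) × (Fin n → Fin k), ∏ j : Fin k, vb (1 + cnt q.2 j) :=
        h2.symm
    _ = _ := h1
    _ = _ := h4

/-- For all `n, k ≥ 0`:
(i) `∂^n(b_1^k)` is the image of the partial `k`-Bell polynomial `B^k_{n+k,k}` under the
`ℚ`-algebra homomorphism `R → R` with `a_i ↦ b_i`, `b_i ↦ b_i`; and
(ii) `binom(n+k,n)·∂^n(b_1^k)` is the sum, over all set partitions of `{1,…,n+k}` into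
`k` nonempty blocks, of `∏_{blocks B} |B|·b_{|B|}` (the classical partial Bell polynomial
`B_{n+k,k}` evaluated at `b_1, 2b_2, 3b_3, …`). -/
theorem stmt9 (n k : ℕ) :
    del^[n] (vb 1 ^ k) = tauMap (rBell n 0 k) ∧
    (((n + k).choose n : ℕ) : RR) * del^[n] (vb 1 ^ k) =
      ∑ π ∈ Finset.univ.filter
          (fun π : Finset (Finset (Fin (n + k)) × Bool) => IsBSP (n + k) k 0 π),
        ∏ p ∈ π, ((p.1.card : RR) * vb p.1.card) := by
  refine ⟨part_i n k, ?_⟩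
  have hA2 := A2 (n := n) (k := k)
  have hA3 := L4 (N := n + k) (k := k)
  have hfact : k.factorial * (n + k).choose n = (n + k).descFactorial k := by
    rw [Nat.descFactorial_eq_factorial_mul_choose]
    congr 1
    rw [← Nat.choose_symm (Nat.le_add_left k n), Nat.add_sub_cancel]
  apply mul_left_cancel₀ (a := ((k.factorial : ℕ) : RR))
    (Nat.cast_ne_zero.mpr k.factorial_ne_zero)
  rw [L1' n]
  calc ((k.factorial : ℕ) : RR) * ((((n + k).choose n : ℕ) : RR) *
        ∑ f : Fin n → Fin k, ∏ j : Fin k, vb (1 + cnt f j))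
      = ((k.factorial * (n + k).choose n : ℕ) : RR) *
          ∑ f : Fin n → Fin k, ∏ j : Fin k, vb (1 + cnt f j) := by
        push_cast; ring
    _ = ∑ h : Fin (n + k) → Fin k, ∏ j : Fin k, ((sfib h j : RR) * vb (sfib h j)) := by
        rw [hfact]; exact hA2
    _ = _ := hA3
end
end

section
/- For all integers n, k, r ≥ 0, the polynomial ∂^n(a_1^r b_1^k) ∈ R equals the sum, over all set partitions {π_1,…,π_{r+k}} of {1,…,n+k+r} into r+k nonempty blocks such that i ∈ π_i for every 1 ≤ i ≤ r+k, of the monomial ∏_{i=1}^{r} a_{|π_i|} · ∏_{i=r+1}^{r+k} b_{|π_i|}. -/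
noncomputable section

open Finset

/-- the derivation as a bundled `Derivation` -/
def Dd : Derivation ℚ RR RR :=
  MvPolynomial.mkDerivation ℚ (fun s : Bool × ℕ => MvPolynomial.X (s.1, s.2 + 1))

lemma del_eq_s10 : del = ⇑Dd := rfl

lemma Dd_va (i : ℕ) : Dd (va i) = va (i + 1) := by
  simp [Dd, va, MvPolynomial.mkDerivation_X]

lemma Dd_vb (i : ℕ) : Dd (vb i) = vb (i + 1) := by
  simp [Dd, vb, MvPolynomial.mkDerivation_X]

/-- Leibniz rule for `Finset.prod` -/
theorem deriv_prod {ι : Type*} [DecidableEq ι] (D : Derivation ℚ RR RR) (s : Finset ι)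
    (f : ι → RR) :
    D (∏ i ∈ s, f i) = ∑ i ∈ s, D (f i) * ∏ j ∈ s.erase i, f j := by
  induction s using Finset.induction_on with
  | empty => simp
  | @insert a s ha ih =>
    have h2 : ∀ i ∈ s, D (f i) * ∏ j ∈ (insert a s).erase i, f j
        = f a * (D (f i) * ∏ j ∈ s.erase i, f j) := by
      intro i hi
      rw [Finset.erase_insert_of_ne (by rintro rfl; exact ha hi),
        Finset.prod_insert (fun h => ha (Finset.mem_of_mem_erase h))]
      ring
    rw [Finset.prod_insert ha, D.leibniz, smul_eq_mul, smul_eq_mul, ih, Finset.sum_insert ha,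
      Finset.erase_insert ha, Finset.sum_congr rfl h2, Finset.mul_sum]
    ring

/-- embed a finset of `Fin M` into `Fin (M+1)` -/
def up {M : ℕ} (S : Finset (Fin M)) : Finset (Fin (M + 1)) := S.map Fin.castSuccEmb

lemma mem_up {M : ℕ} {S : Finset (Fin M)} {x : Fin M} : x.castSucc ∈ up S ↔ x ∈ S :=
  Finset.mem_map' _

lemma last_not_mem_up {M : ℕ} (S : Finset (Fin M)) : Fin.last M ∉ up S := by
  simp only [up, Finset.mem_map, Fin.coe_castSuccEmb]
  rintro ⟨y, hy, h⟩
  exact (Fin.castSucc_lt_last y).ne h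

lemma card_up {M : ℕ} (S : Finset (Fin M)) : (up S).card = S.card := Finset.card_map _

lemma up_inj {M : ℕ} : Function.Injective (up (M := M)) := Finset.map_injective _

lemma disjoint_up {M : ℕ} {S T : Finset (Fin M)} : Disjoint (up S) (up T) ↔ Disjoint S T :=
  Finset.disjoint_map _

/-- restrict a finset of `Fin (M+1)` to `Fin M` -/
def down {M : ℕ} (S : Finset (Fin (M + 1))) : Finset (Fin M) :=
  S.preimage Fin.castSucc (Fin.castSucc_injective M).injOn

lemma mem_down {M : ℕ} {S : Finset (Fin (M + 1))} {x : Fin M} :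
    x ∈ down S ↔ x.castSucc ∈ S := Finset.mem_preimage

lemma up_down {M : ℕ} (S : Finset (Fin (M + 1))) : up (down S) = S.erase (Fin.last M) := by
  ext x
  simp only [up, down, Finset.mem_map, Finset.mem_preimage, Finset.mem_erase,
    Fin.coe_castSuccEmb]
  constructor
  · rintro ⟨y, hy, rfl⟩; exact ⟨(Fin.castSucc_lt_last y).ne, hy⟩
  · rintro ⟨hne, hx⟩
    obtain ⟨y, rfl⟩ := Fin.exists_castSucc_eq.mpr hne
    exact ⟨y, hx, rfl⟩

theorem aux (k r : ℕ) : ∀ (n N : ℕ), N = n + k + r → ∀ (hle : r + k ≤ N),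
    del^[n] (va 1 ^ r * vb 1 ^ k) =
      ∑ π ∈ Finset.univ.filter
          (fun π : Fin (r + k) → Finset (Fin N) =>
            (∀ i : Fin (r + k), Fin.castLE hle i ∈ π i) ∧
            (∀ i j : Fin (r + k), i ≠ j → Disjoint (π i) (π j)) ∧
            (∀ x : Fin N, ∃ i, x ∈ π i)),
        ∏ i : Fin (r + k), (if (i : ℕ) < r then va (π i).card else vb (π i).card) := by
  intro n
  induction n with
  | zero =>
    intro N hN hle
    subst hN
    rw [Function.iterate_zero_apply]
    have hcast : ∀ x : Fin (0 + k + r), ∃ j : Fin (r + k), Fin.castLE hle j = x := by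
      intro x
      exact ⟨⟨x.val, by omega⟩, rfl⟩
    have hfilter : (Finset.univ.filter
          (fun π : Fin (r + k) → Finset (Fin (0 + k + r)) =>
            (∀ i : Fin (r + k), Fin.castLE hle i ∈ π i) ∧
            (∀ i j : Fin (r + k), i ≠ j → Disjoint (π i) (π j)) ∧
            (∀ x : Fin (0 + k + r), ∃ i, x ∈ π i)))
        = {fun i => {Fin.castLE hle i}} := by
      ext π
      simp only [Finset.mem_filter, Finset.mem_univ, true_and, Finset.mem_singleton]
      constructor
      · rintro ⟨h1, h2, h3⟩
        funext i
        refine subset_antisymm ?_ (Finset.singleton_subset_iff.mpr (h1 i))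
        intro x hx
        obtain ⟨j, rfl⟩ := hcast x
        rw [Finset.mem_singleton]
        by_cases hij : i = j
        · rw [hij]
        · exact ((Finset.disjoint_left.mp (h2 i j hij) hx) (h1 j)).elim
      · rintro rfl
        refine ⟨fun i => Finset.mem_singleton_self _, fun i j hij => ?_, fun x => ?_⟩
        · rw [Finset.disjoint_singleton]
          exact fun h => hij (Fin.castLE_injective hle h)
        · obtain ⟨j, rfl⟩ := hcast x
          exact ⟨j, Finset.mem_singleton_self _⟩
    rw [hfilter, Finset.sum_singleton]
    simp only [Finset.card_singleton]
    rw [Fin.prod_univ_add]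
    have e1 : ∀ i : Fin r, (if ((Fin.castAdd k i : Fin (r + k)) : ℕ) < r then va 1 else vb 1)
        = va 1 := fun i => if_pos i.isLt
    have e2 : ∀ i : Fin k, (if ((Fin.natAdd r i : Fin (r + k)) : ℕ) < r then va 1 else vb 1)
        = vb 1 := fun i => if_neg (by simp)
    rw [Finset.prod_congr rfl (fun i _ => e1 i), Finset.prod_congr rfl (fun i _ => e2 i),
      Finset.prod_const, Finset.prod_const, Finset.card_univ, Finset.card_univ,
      Fintype.card_fin, Fintype.card_fin]
  | succ n IH =>
    intro N hN hle
    have hN' : N = (n + k + r) + 1 := by omega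
    subst hN'
    have hle' : r + k ≤ n + k + r := by omega
    rw [Function.iterate_succ_apply', IH (n + k + r) rfl hle', del_eq_s10, map_sum]
    simp only [deriv_prod Dd]
    have hDf : ∀ (c : ℕ) (i : Fin (r + k)),
        Dd (if (i : ℕ) < r then va c else vb c)
          = if (i : ℕ) < r then va (c + 1) else vb (c + 1) := by
      intro c i
      split_ifs
      · exact Dd_va c
      · exact Dd_vb c
    simp only [hDf]
    rw [← Finset.sum_product']
    refine Finset.sum_bij
      (fun (p : (Fin (r + k) → Finset (Fin (n + k + r))) × Fin (r + k)) _ =>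
        fun j => if j = p.2 then insert (Fin.last (n + k + r)) (up (p.1 j)) else up (p.1 j))
      ?_ ?_ ?_ ?_
    · rintro ⟨π, i⟩ hp
      rw [Finset.mem_product, Finset.mem_filter] at hp
      obtain ⟨⟨-, h1, h2, h3⟩, -⟩ := hp
      rw [Finset.mem_filter]
      refine ⟨Finset.mem_univ _, fun j => ?_, fun j j' hne => ?_, fun x => ?_⟩
      · dsimp only
        split_ifs
        · exact Finset.mem_insert_of_mem (mem_up.mpr (h1 j))
        · exact mem_up.mpr (h1 j)
      · dsimp only
        split_ifs with hj hj' hj'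
        · exact absurd (hj.trans hj'.symm) hne
        · rw [Finset.disjoint_insert_left]
          exact ⟨last_not_mem_up _, disjoint_up.mpr (h2 j j' hne)⟩
        · rw [Finset.disjoint_insert_right]
          exact ⟨last_not_mem_up _, disjoint_up.mpr (h2 j j' hne)⟩
        · exact disjoint_up.mpr (h2 j j' hne)
      · rcases Fin.eq_castSucc_or_eq_last x with ⟨y, rfl⟩ | rfl
        · obtain ⟨j, hj⟩ := h3 y
          refine ⟨j, ?_⟩
          dsimp only
          split_ifs
          · exact Finset.mem_insert_of_mem (mem_up.mpr hj)
          · exact mem_up.mpr hj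
        · refine ⟨i, ?_⟩
          dsimp only
          rw [if_pos rfl]
          exact Finset.mem_insert_self _ _
    · rintro ⟨π, i⟩ hp ⟨σ, i'⟩ hq heq
      have hii' : i = i' := by
        by_contra hne
        have h1 := congrFun heq i'
        dsimp only at h1
        rw [if_neg (fun h => hne h.symm), if_pos rfl] at h1
        exact last_not_mem_up (π i') (h1 ▸ Finset.mem_insert_self _ _)
      subst hii'
      have hps : π = σ := by
        funext j
        have hj := congrFun heq j
        dsimp only at hj
        by_cases hji : j = i
        · rw [if_pos hji, if_pos hji] at hj
          apply up_inj
          rw [← Finset.erase_insert (last_not_mem_up (π j)), hj,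
            Finset.erase_insert (last_not_mem_up (σ j))]
        · rw [if_neg hji, if_neg hji] at hj
          exact up_inj hj
      rw [hps]
    · intro π' hπ'
      rw [Finset.mem_filter] at hπ'
      obtain ⟨-, h1, h2, h3⟩ := hπ'
      obtain ⟨i, hi⟩ := h3 (Fin.last _)
      refine ⟨(fun j => down (π' j), i), ?_, ?_⟩
      · rw [Finset.mem_product, Finset.mem_filter]
        refine ⟨⟨Finset.mem_univ _, fun j => mem_down.mpr (h1 j),
          fun j j' hne => ?_, fun y => (h3 y.castSucc).imp fun j hj => mem_down.mpr hj⟩,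
          Finset.mem_univ _⟩
        exact Finset.disjoint_left.mpr fun x hx hx' =>
          Finset.disjoint_left.mp (h2 j j' hne) (mem_down.mp hx) (mem_down.mp hx')
      · funext j
        dsimp only
        by_cases hji : j = i
        · subst hji
          rw [if_pos rfl, up_down]
          exact Finset.insert_erase hi
        · rw [if_neg hji, up_down]
          exact Finset.erase_eq_of_notMem fun hlast =>
            Finset.disjoint_left.mp (h2 j i hji) hlast hi
    · rintro ⟨π, i⟩ hp
      dsimp only
      rw [← Finset.mul_prod_erase Finset.univ _ (Finset.mem_univ i)]
      congr 1
      · have hc : (if i = i then insert (Fin.last (n + k + r)) (up (π i)) else up (π i)).card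
            = (π i).card + 1 := by
          rw [if_pos rfl, Finset.card_insert_of_notMem (last_not_mem_up _), card_up]
        rw [hc]
      · refine Finset.prod_congr rfl fun j hj => ?_
        have hji : j ≠ i := Finset.ne_of_mem_erase hj
        have hc : (if j = i then insert (Fin.last (n + k + r)) (up (π j)) else up (π j)).card
            = (π j).card := by rw [if_neg hji, card_up]
        rw [hc]

/-- For all `n, k, r ≥ 0`, `∂^n(a_1^r b_1^k)` is the sum, over all set
partitions `{π_1,…,π_{r+k}}` of `{1,…,n+k+r}` into `r+k` nonempty blocks with `i ∈ π_i`
for `1 ≤ i ≤ r+k`, of `∏_{i=1}^r a_{|π_i|} · ∏_{i=r+1}^{r+k} b_{|π_i|}`.  (Such labeled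
partitions are encoded as functions `π : Fin (r+k) → Finset (Fin (n+k+r))` whose values
are pairwise disjoint, cover everything, and satisfy `i ∈ π i`; nonemptiness follows.) -/
theorem stmt10 (n k r : ℕ) :
    del^[n] (va 1 ^ r * vb 1 ^ k) =
      ∑ π ∈ Finset.univ.filter
          (fun π : Fin (r + k) → Finset (Fin (n + k + r)) =>
            (∀ i : Fin (r + k), Fin.castLE (by omega) i ∈ π i) ∧
            (∀ i j : Fin (r + k), i ≠ j → Disjoint (π i) (π j)) ∧
            (∀ x : Fin (n + k + r), ∃ i, x ∈ π i)),
        ∏ i : Fin (r + k), (if (i : ℕ) < r then va (π i).card else vb (π i).card) := by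
  exact aux k r n (n + k + r) rfl (by omega)
end
end

section
/- Let A be an associative unital ℚ-algebra, D : A → A a derivation, b ∈ A, and set b_i := D^{i−1}(b) for i ≥ 1. For f ∈ A let R_f ∈ End(A) denote right multiplication p ↦ p·f, and for X, Y ∈ End(A) let ad_X(Y) := X∘Y − Y∘X. Then for all integers n ≥ 2 and 1 ≤ k ≤ n−1: ad_D^{n−k−1}( ad_{R_b}^{k}(D) ) = (−1)^k · R_c, where c = ∑ (n−k−1)!/((i_1−1)!⋯(i_{k−1}−1)!·(i_k−2)!) · [b_{i_1},[b_{i_2},[…,[b_{i_{k−1}}, b_{i_k}]…]]], the sum being over all k-tuples (i_1,…,i_k) of integers with i_1+⋯+i_k = n, i_j ≥ 1 for 1 ≤ j ≤ k−1, and i_k ≥ 2, and where [u,v] = uv − vu denotes the commutator in A (for k = 1 the nested bracket is just b_{i_1} = b_n). -/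
/-- The right-nested commutator `[u_1,[u_2,[…,[u_{k-1},u_k]…]]]` of a list of elements
(for a singleton list it is the element itself). -/
def nestedComm {A : Type*} [Ring A] : List A → A
  | [] => 0
  | [u] => u
  | u :: v :: rest => u * nestedComm (v :: rest) - nestedComm (v :: rest) * u

section Aux

variable {A : Type*} [Ring A]

lemma nestedComm_cons (u : A) (l : List A) (hl : l ≠ []) :
    nestedComm (u :: l) = u * nestedComm l - nestedComm l * u := by
  cases l with
  | nil => exact absurd rfl hl
  | cons v t => rfl

variable [Algebra ℚ A] (D : Module.End ℚ A) (b : A)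

/-- Leibniz rule for nested commutators. -/
lemma D_nestedComm (hD : ∀ x y : A, D (x * y) = D x * y + x * D y) : ∀ l : List A,
    D (nestedComm l) = ∑ j ∈ Finset.range l.length,
      nestedComm (l.set j (D (l.getD j 0))) := by
  intro l
  induction l with
  | nil => simp [nestedComm]
  | cons u t ih =>
    cases t with
    | nil => simp [nestedComm]
    | cons v s =>
      have hne : (v :: s) ≠ [] := by simp
      rw [nestedComm_cons u _ hne, map_sub, hD, hD]
      rw [show (u :: v :: s).length = (v :: s).length + 1 from rfl, Finset.sum_range_succ']
      have h0 : (u :: v :: s).set 0 (D ((u :: v :: s).getD 0 0)) = D u :: v :: s := by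
        simp
      have hterm : ∀ j, (u :: v :: s).set (j + 1) (D ((u :: v :: s).getD (j + 1) 0)) =
          u :: (v :: s).set j (D ((v :: s).getD j 0)) := by
        intro j; simp
      simp only [hterm]
      rw [h0, nestedComm_cons (D u) _ hne]
      have hsetne : ∀ j, (v :: s).set j (D ((v :: s).getD j 0)) ≠ [] := by
        intro j
        apply List.ne_nil_of_length_pos
        simp
      have hcons : ∀ j ∈ Finset.range (v :: s).length,
          nestedComm (u :: (v :: s).set j (D ((v :: s).getD j 0))) =
            u * nestedComm ((v :: s).set j (D ((v :: s).getD j 0))) -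
              nestedComm ((v :: s).set j (D ((v :: s).getD j 0))) * u := by
        intro j _; exact nestedComm_cons u _ (hsetne j)
      rw [Finset.sum_congr rfl hcons, Finset.sum_sub_distrib, ← Finset.mul_sum,
        ← Finset.sum_mul, ← ih]
      abel

lemma set_map_finRange {B : Type*} {k : ℕ} (f : Fin k → B) (j : Fin k) (x : B) :
    ((List.finRange k).map f).set j x = (List.finRange k).map (Function.update f j x) := by
  apply List.ext_getElem
  · simp
  · intro i h1 h2
    simp only [List.getElem_set, List.getElem_map, List.getElem_finRange,
      Function.update_apply, Fin.ext_iff, Fin.coe_cast]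
    split_ifs with ha hb <;> first | rfl | omega

/-- `T u` is the nested commutator of the `D^[u j] b`. -/
def TT {k : ℕ} (u : Fin k → ℕ) : A :=
  nestedComm ((List.finRange k).map fun j => (⇑D)^[u j] b)

lemma D_TT (hD : ∀ x y : A, D (x * y) = D x * y + x * D y) {k : ℕ} (u : Fin k → ℕ) :
    D (TT D b u) = ∑ j : Fin k, TT D b (Function.update u j (u j + 1)) := by
  rw [TT, D_nestedComm D hD]
  have hlen : ((List.finRange k).map fun j => (⇑D)^[u j] b).length = k := by simp
  rw [hlen, ← Fin.sum_univ_eq_sum_range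
    (fun j => nestedComm ((((List.finRange k).map fun i => (⇑D)^[u i] b)).set j
      (D ((((List.finRange k).map fun i => (⇑D)^[u i] b)).getD j 0)))) k]
  apply Finset.sum_congr rfl
  intro j _
  have hj : (j : ℕ) < ((List.finRange k).map fun i => (⇑D)^[u i] b).length := by
    simp [j.isLt]
  rw [List.getD_eq_getElem _ _ hj]
  have hget : ((List.finRange k).map fun i => (⇑D)^[u i] b)[(j : ℕ)] = (⇑D)^[u j] b := by
    simp
  rw [hget, ← Function.iterate_succ_apply' D, set_map_finRange, TT]
  congr 1
  apply List.map_congr_left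
  intro i _
  rcases eq_or_ne i j with h | h
  · subst h; simp
  · simp [Function.update_of_ne h]


lemma update_add_sum {k : ℕ} (v : Fin k → ℕ) (j : Fin k) :
    ∑ i, Function.update v j (v j + 1) i = (∑ i, v i) + 1 := by
  rw [Finset.sum_update_of_mem (Finset.mem_univ j),
    Finset.sum_eq_add_sum_sdiff_singleton_of_mem (Finset.mem_univ j) v]
  omega

lemma update_sub_sum {k : ℕ} (w : Fin k → ℕ) (j : Fin k) (hw : 1 ≤ w j) :
    ∑ i, Function.update w j (w j - 1) i = (∑ i, w i) - 1 := by
  rw [Finset.sum_update_of_mem (Finset.mem_univ j),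
    Finset.sum_eq_add_sum_sdiff_singleton_of_mem (Finset.mem_univ j) w]
  omega

lemma update_factorial_prod {k : ℕ} (v : Fin k → ℕ) (j : Fin k) :
    ∏ i, (((Function.update v j (v j + 1)) i).factorial : ℚ) =
      ((v j : ℚ) + 1) * ∏ i, ((v i).factorial : ℚ) := by
  have h1 : ∀ i, (((Function.update v j (v j + 1)) i).factorial : ℚ) =
      Function.update (fun i => ((v i).factorial : ℚ)) j (((v j + 1).factorial : ℚ)) i := by
    intro i
    rcases eq_or_ne i j with h | h
    · subst h; simp
    · simp [Function.update_of_ne h]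
  simp only [h1]
  rw [Finset.prod_update_of_mem (Finset.mem_univ j),
    Finset.prod_eq_mul_prod_sdiff_singleton_of_mem (Finset.mem_univ j)
      (fun i => ((v i).factorial : ℚ)), Nat.factorial_succ]
  push_cast
  ring

lemma prod_factorial_ne_zero {k : ℕ} (v : Fin k → ℕ) :
    (∏ i, ((v i).factorial : ℚ)) ≠ 0 := by
  apply Finset.prod_ne_zero_iff.2
  intro i _
  exact_mod_cast Nat.cast_ne_zero.2 (v i).factorial_ne_zero

lemma iter_D_TT (hD : ∀ x y : A, D (x * y) = D x * y + x * D y) (m : ℕ) :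
    ∀ {k : ℕ} (u : Fin k → ℕ),
    (⇑D)^[m] (TT D b u) = ∑ v ∈ Finset.Nat.antidiagonalTuple k m,
      ((m.factorial : ℚ) / ∏ j, ((v j).factorial : ℚ)) • TT D b (u + v) := by
  induction m with
  | zero =>
    intro k u
    simp [Finset.Nat.antidiagonalTuple_zero_right]
  | succ m ih =>
    intro k u
    rw [Function.iterate_succ_apply', ih, map_sum]
    simp only [map_smul, D_TT D b hD, Finset.smul_sum]
    have hupd : ∀ (v : Fin k → ℕ) (j : Fin k),
        Function.update (u + v) j ((u + v) j + 1) = u + Function.update v j (v j + 1) := by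
      intro v j
      funext i
      rcases eq_or_ne i j with h | h
      · subst h; simp; omega
      · simp [Function.update_of_ne h]
    simp only [hupd]
    rw [← Finset.sum_product']
    have step1 : ∑ p ∈ Finset.Nat.antidiagonalTuple k m ×ˢ (Finset.univ : Finset (Fin k)),
          ((m.factorial : ℚ) / ∏ i, ((p.1 i).factorial : ℚ)) •
            TT D b (u + Function.update p.1 p.2 (p.1 p.2 + 1)) =
        ∑ p ∈ ((Finset.Nat.antidiagonalTuple k (m + 1)) ×ˢ
            (Finset.univ : Finset (Fin k))).filter (fun p => 1 ≤ p.1 p.2),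
          (((m.factorial : ℚ) * (p.1 p.2 : ℚ)) / ∏ i, ((p.1 i).factorial : ℚ)) •
            TT D b (u + p.1) := by
      apply Finset.sum_nbij'
        (i := fun p => (Function.update p.1 p.2 (p.1 p.2 + 1), p.2))
        (j := fun p => (Function.update p.1 p.2 (p.1 p.2 - 1), p.2))
      · intro p hp
        rw [Finset.mem_product] at hp
        rw [Finset.mem_filter, Finset.mem_product]
        refine ⟨⟨?_, Finset.mem_univ _⟩, by simp⟩
        rw [Finset.Nat.mem_antidiagonalTuple] at hp ⊢
        rw [update_add_sum, hp.1]
      · intro p hp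
        rw [Finset.mem_filter, Finset.mem_product, Finset.Nat.mem_antidiagonalTuple] at hp
        rw [Finset.mem_product, Finset.Nat.mem_antidiagonalTuple]
        refine ⟨?_, Finset.mem_univ _⟩
        rw [update_sub_sum _ _ hp.2, hp.1.1]
        omega
      · intro p hp
        have : Function.update p.1 p.2 (p.1 p.2 + 1) p.2 = p.1 p.2 + 1 := by simp
        simp only [this]
        rw [Prod.ext_iff]
        refine ⟨?_, rfl⟩
        rw [Function.update_idem]
        simp [Function.update_eq_self]
      · intro p hp
        rw [Finset.mem_filter] at hp
        have : Function.update p.1 p.2 (p.1 p.2 - 1) p.2 = p.1 p.2 - 1 := by simp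
        simp only [this]
        rw [Prod.ext_iff]
        refine ⟨?_, rfl⟩
        rw [Function.update_idem, Nat.sub_add_cancel hp.2]
        exact Function.update_eq_self _ _
      · intro p hp
        congr 1
        dsimp only
        have h2 : Function.update p.1 p.2 (p.1 p.2 + 1) p.2 = p.1 p.2 + 1 := by simp
        rw [h2, update_factorial_prod]
        have hP := prod_factorial_ne_zero p.1
        have hx : ((p.1 p.2 : ℚ) + 1) ≠ 0 := by positivity
        field_simp
        push_cast
        ring
    rw [step1, Finset.sum_filter_of_ne, Finset.sum_product]
    · apply Finset.sum_congr rfl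
      intro w hw
      rw [Finset.Nat.mem_antidiagonalTuple] at hw
      dsimp only
      rw [← Finset.sum_smul]
      congr 1
      rw [← Finset.sum_div, ← Finset.mul_sum]
      have hcast : ∑ j : Fin k, (w j : ℚ) = ((m : ℚ) + 1) := by
        rw [← Nat.cast_sum, hw]
        push_cast
        ring
      rw [hcast, Nat.factorial_succ]
      push_cast
      ring
    · intro p hp hne
      by_contra hlt
      apply hne
      have h0 : p.1 p.2 = 0 := by omega
      simp [h0]


lemma R_sub (x y : A) : LinearMap.mulRight ℚ (x - y) =
    LinearMap.mulRight ℚ x - LinearMap.mulRight ℚ y := by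
  ext z; simp [mul_sub]

lemma adD_R (hD : ∀ x y : A, D (x * y) = D x * y + x * D y) (f : A) :
    D * LinearMap.mulRight ℚ f - LinearMap.mulRight ℚ f * D =
      LinearMap.mulRight ℚ (D f) := by
  ext x
  simp [Module.End.mul_apply, hD x f]

lemma adRb_R (f : A) :
    LinearMap.mulRight ℚ b * LinearMap.mulRight ℚ f -
        LinearMap.mulRight ℚ f * LinearMap.mulRight ℚ b =
      LinearMap.mulRight ℚ (f * b - b * f) := by
  ext x
  simp [Module.End.mul_apply, mul_sub, mul_assoc]

lemma adD_iter (hD : ∀ x y : A, D (x * y) = D x * y + x * D y) (m : ℕ) (s : ℚ) :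
    ∀ c : A, (fun Y : Module.End ℚ A => D * Y - Y * D)^[m] (s • LinearMap.mulRight ℚ c) =
      s • LinearMap.mulRight ℚ ((⇑D)^[m] c) := by
  induction m with
  | zero => intro c; simp
  | succ m ih =>
    intro c
    rw [Function.iterate_succ_apply]
    have h1 : D * (s • LinearMap.mulRight ℚ c) - (s • LinearMap.mulRight ℚ c) * D
        = s • LinearMap.mulRight ℚ (D c) := by
      rw [mul_smul_comm, smul_mul_assoc, ← adD_R D hD, smul_sub]
    rw [h1, ih, Function.iterate_succ_apply]

/-- The starting exponent tuple `(0,…,0,1)`. -/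
def u0 (k : ℕ) : Fin k → ℕ := fun j => if (j : ℕ) = k - 1 then 1 else 0

lemma sum_u0 (k : ℕ) (hk : 1 ≤ k) : ∑ j, u0 k j = 1 := by
  have h : ∀ j : Fin k, u0 k j = if j = (⟨k - 1, by omega⟩ : Fin k) then 1 else 0 := by
    intro j; simp [u0, Fin.ext_iff]
  simp only [h]
  rw [Finset.sum_ite_eq' Finset.univ]
  simp

lemma TT_u0_succ (k : ℕ) (hk : 1 ≤ k) :
    TT D b (u0 (k + 1)) = b * TT D b (u0 k) - TT D b (u0 k) * b := by
  have hlist : (List.finRange (k + 1)).map (fun j => (⇑D)^[u0 (k + 1) j] b)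
      = b :: (List.finRange k).map (fun j => (⇑D)^[u0 k j] b) := by
    rw [List.finRange_succ, List.map_cons, List.map_map]
    congr 1
    · have : u0 (k + 1) 0 = 0 := by
        simp only [u0]
        rw [if_neg (by simp; omega)]
      rw [this]
      rfl
    · apply List.map_congr_left
      intro j _
      have : u0 (k + 1) j.succ = u0 k j := by
        simp only [u0, Fin.val_succ]
        by_cases h : (j : ℕ) = k - 1
        · rw [if_pos (by omega), if_pos h]
        · rw [if_neg (by omega), if_neg h]
      simp [this]
  rw [TT, hlist, nestedComm_cons]
  · rfl
  · apply List.ne_nil_of_length_pos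
    simp
    omega

lemma adRb_iter (hD : ∀ x y : A, D (x * y) = D x * y + x * D y) :
    ∀ k, 1 ≤ k →
    (fun Y : Module.End ℚ A =>
        LinearMap.mulRight ℚ b * Y - Y * LinearMap.mulRight ℚ b)^[k] D
      = ((-1 : ℚ) ^ k) • LinearMap.mulRight ℚ (TT D b (u0 k)) := by
  intro k
  induction k with
  | zero => omega
  | succ k ih =>
    intro _
    rcases Nat.eq_zero_or_pos k with hk | hk
    · subst hk
      rw [Function.iterate_one]
      have h1 : TT D b (u0 1) = D b := by
        simp [TT, u0, List.finRange_succ, List.finRange_zero, nestedComm]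
      rw [h1]
      rw [show LinearMap.mulRight ℚ b * D - D * LinearMap.mulRight ℚ b
        = -(D * LinearMap.mulRight ℚ b - LinearMap.mulRight ℚ b * D) by abel, adD_R D hD]
      simp
      exact (neg_one_smul ℚ _).symm
    · rw [Function.iterate_succ_apply', ih hk, TT_u0_succ D b k hk]
      rw [mul_smul_comm, smul_mul_assoc, show (-1 : ℚ) ^ k • (LinearMap.mulRight ℚ b *
          LinearMap.mulRight ℚ (TT D b (u0 k))) - (-1 : ℚ) ^ k • (LinearMap.mulRight ℚ
          (TT D b (u0 k)) * LinearMap.mulRight ℚ b) = (-1 : ℚ) ^ k • (LinearMap.mulRight ℚ b *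
          LinearMap.mulRight ℚ (TT D b (u0 k)) - LinearMap.mulRight ℚ (TT D b (u0 k)) *
          LinearMap.mulRight ℚ b) from (smul_sub _ _ _).symm, adRb_R b (TT D b (u0 k))]
      have h2 : LinearMap.mulRight ℚ (TT D b (u0 k) * b - b * TT D b (u0 k)) =
          -(LinearMap.mulRight ℚ (b * TT D b (u0 k) - TT D b (u0 k) * b)) := by
        rw [show TT D b (u0 k) * b - b * TT D b (u0 k)
          = -(b * TT D b (u0 k) - TT D b (u0 k) * b) by abel]
        rw [show -(b * TT D b (u0 k) - TT D b (u0 k) * b)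
          = (0 : A) - (b * TT D b (u0 k) - TT D b (u0 k) * b) by abel, R_sub]
        rw [show LinearMap.mulRight ℚ (0 : A) = 0 from by ext x; simp, zero_sub]
      rw [h2, smul_neg, ← neg_smul, pow_succ]
      ring_nf

end Aux

/-- Let `A` be an associative unital `ℚ`-algebra, `D` a derivation of
`A`, `b ∈ A` and `b_i := D^{i-1}(b)`.  Writing `R_f` for right multiplication by `f` and
`ad_X(Y) = X∘Y − Y∘X` in `End(A)`, for all `n ≥ 2` and `1 ≤ k ≤ n−1` one has
`ad_D^{n−k−1}(ad_{R_b}^k(D)) = (−1)^k·R_c` with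
`c = ∑ (n−k−1)!/((i_1−1)!⋯(i_{k−1}−1)!·(i_k−2)!)·[b_{i_1},[b_{i_2},[…,[b_{i_{k−1}},b_{i_k}]…]]]`,
the sum being over `k`-tuples `(i_1,…,i_k)` with `i_1+⋯+i_k = n`, `i_j ≥ 1` for `j < k`
and `i_k ≥ 2`. -/
theorem stmt11 {A : Type*} [Ring A] [Algebra ℚ A] (D : Module.End ℚ A)
    (hD : ∀ x y : A, D (x * y) = D x * y + x * D y) (b : A)
    (n k : ℕ) (hn : 2 ≤ n) (hk1 : 1 ≤ k) (hk2 : k ≤ n - 1) :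
    (fun Y : Module.End ℚ A => D * Y - Y * D)^[n - k - 1]
        ((fun Y : Module.End ℚ A =>
            LinearMap.mulRight ℚ b * Y - Y * LinearMap.mulRight ℚ b)^[k] D) =
      ((-1 : ℚ) ^ k) • LinearMap.mulRight ℚ
        (∑ v ∈ (Finset.Nat.antidiagonalTuple k n).filter
            (fun v => (∀ j : Fin k, (j : ℕ) < k - 1 → 1 ≤ v j) ∧
              (∀ j : Fin k, (j : ℕ) = k - 1 → 2 ≤ v j)),
          (((n - k - 1).factorial : ℚ) /
              ((∏ j : Fin k,
                if (j : ℕ) = k - 1 then (v j - 2).factorial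
                else (v j - 1).factorial : ℕ) : ℚ)) •
            nestedComm ((List.finRange k).map (fun j => (⇑D)^[v j - 1] b))) := by
  rw [adRb_iter D b hD k hk1, adD_iter D hD (n - k - 1) ((-1 : ℚ) ^ k) (TT D b (u0 k))]
  congr 1
  rw [iter_D_TT D b hD (n - k - 1) (u0 k)]
  congr 1
  apply Finset.sum_nbij' (i := fun v => fun j => v j + u0 k j + 1)
    (j := fun w => fun j => w j - u0 k j - 1)
  · intro v hv
    rw [Finset.Nat.mem_antidiagonalTuple] at hv
    rw [Finset.mem_filter, Finset.Nat.mem_antidiagonalTuple]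
    refine ⟨?_, fun j _ => Nat.le_add_left 1 _, fun j hj => by simp [u0, hj]⟩
    rw [Finset.sum_add_distrib, Finset.sum_add_distrib, hv, sum_u0 k hk1]
    simp only [Finset.sum_const, Finset.card_univ, Fintype.card_fin, smul_eq_mul, mul_one]
    omega
  · intro w hw
    rw [Finset.mem_filter, Finset.Nat.mem_antidiagonalTuple] at hw
    rw [Finset.Nat.mem_antidiagonalTuple]
    have hbd : ∀ j : Fin k, u0 k j + 1 ≤ w j := by
      intro j
      rcases eq_or_ne ((j : ℕ)) (k - 1) with h | h
      · have := hw.2.2 j h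
        simp only [u0, if_pos h]
        omega
      · have hj : (j : ℕ) < k - 1 := by have := j.isLt; omega
        have := hw.2.1 j hj
        simp only [u0, if_neg h]
        omega
    have key : ∑ j, (w j - u0 k j - 1) + ∑ j, (u0 k j + 1) = ∑ j, w j := by
      rw [← Finset.sum_add_distrib]
      apply Finset.sum_congr rfl
      intro j _
      have := hbd j
      omega
    rw [Finset.sum_add_distrib, sum_u0 k hk1] at key
    simp only [Finset.sum_const, Finset.card_univ, Fintype.card_fin, smul_eq_mul,
      mul_one] at key
    omega
  · intro v hv
    funext j
    simp only
    omega
  · intro w hw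
    rw [Finset.mem_filter, Finset.Nat.mem_antidiagonalTuple] at hw
    have hbd : ∀ j : Fin k, u0 k j + 1 ≤ w j := by
      intro j
      rcases eq_or_ne ((j : ℕ)) (k - 1) with h | h
      · have := hw.2.2 j h
        simp only [u0, if_pos h]
        omega
      · have hj : (j : ℕ) < k - 1 := by have := j.isLt; omega
        have := hw.2.1 j hj
        simp only [u0, if_neg h]
        omega
    funext j
    simp only
    have := hbd j
    omega
  · intro v hv
    have hden : (∏ j : Fin k,
        if (j : ℕ) = k - 1 then ((v j + u0 k j + 1) - 2).factorial
        else ((v j + u0 k j + 1) - 1).factorial) = ∏ j : Fin k, (v j).factorial := by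
      apply Finset.prod_congr rfl
      intro j _
      rcases eq_or_ne ((j : ℕ)) (k - 1) with h | h
      · rw [if_pos h]
        simp [u0, h]
      · rw [if_neg h]
        simp [u0, h]
    have hlist : (List.finRange k).map (fun j => (⇑D)^[(v j + u0 k j + 1) - 1] b) =
        (List.finRange k).map (fun j => (⇑D)^[(u0 k + v) j] b) := by
      apply List.map_congr_left
      intro j _
      congr 1
      simp only [Pi.add_apply]
      omega
    simp only
    rw [hden, hlist, Nat.cast_prod, TT]


-- #print axioms check
end
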